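/- arXiv:math/0403267 — 3 statements merged into one kernel-verified Lean document; each statement's English description precedes it below -/
import Mathlib

section
/- For the random walk P_{α,q} on the homogeneous tree T_q with 1/2 < α < 1 and β = (1-α)/α, the function x ↦ φ(x) given by φ(x) = (β^{d(x,y)}/q^{∇}) · ( (qβ⁻¹+1)/(qβ⁻²-1) + (β^{-Δ}-1)/(β⁻¹-1) + (β^{-∇}-1)/(β⁻¹-1) ), where Δ = Δ(x,y) and ∇ = ∇(x,y) are the number of upward and downward steps from x to y, is P_{α,q}-harmonic in x for each fixed vertex y. -/
open Classical

/-- n-step transition probabilities of a Markov kernel. -/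
noncomputable def nstep {X : Type*} (p : X → X → ℝ) : ℕ → X → X → ℝ
  | 0, x, y => if x = y then 1 else 0
  | (n+1), x, y => ∑' z, nstep p n x z * p z y

/-- Green function. -/
noncomputable def green {X : Type*} (p : X → X → ℝ) (x y : X) : ℝ :=
  ∑' n, nstep p n x y

/-- Probability that the chain started at `a` ever visits `b`
(sum of weights of paths hitting `b` for the first time at the last step). -/
noncomputable def hitProb {X : Type*} (p : X → X → ℝ) (a b : X) : ℝ :=
  ∑' n : ℕ, ∑' g : {g : Fin (n+1) → X //
      g 0 = a ∧ g (Fin.last n) = b ∧ ∀ j, j ≠ Fin.last n → g j ≠ b},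
    ∏ i : Fin n, p (g.1 i.castSucc) (g.1 i.succ)

/-- Probability that the chain started at `a` visits `b` before ever visiting `c`. -/
noncomputable def hitBefore {X : Type*} (p : X → X → ℝ) (a b c : X) : ℝ :=
  ∑' n : ℕ, ∑' g : {g : Fin (n+1) → X //
      g 0 = a ∧ g (Fin.last n) = b ∧ (∀ j, j ≠ Fin.last n → g j ≠ b) ∧ ∀ j, g j ≠ c},
    ∏ i : Fin n, p (g.1 i.castSucc) (g.1 i.succ)

/-- The homogeneous tree `T_q` with a fixed reference end, encoded by the
predecessor ("one step towards the end") map. -/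
structure TreeWithEnd (q : ℕ) where
  V : Type
  countable : Countable V
  pred : V → V
  fiber_card : ∀ x : V, Nat.card {y : V // pred y = x} = q
  acyclic : ∀ (x : V) (n : ℕ), 0 < n → pred^[n] x ≠ x
  connected : ∀ x y : V, ∃ m n : ℕ, pred^[m] x = pred^[n] y

/-- Number of upward steps Δ(x,y) from `x` to the confluent `x ⋏ y`. -/
noncomputable def TreeWithEnd.up {q : ℕ} (T : TreeWithEnd q) (x y : T.V) : ℕ :=
  sInf {m : ℕ | ∃ n : ℕ, T.pred^[m] x = T.pred^[n] y}

/-- Number of downward steps ∇(x,y) = Δ(y,x). -/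
noncomputable def TreeWithEnd.down {q : ℕ} (T : TreeWithEnd q) (x y : T.V) : ℕ :=
  T.up y x

/-- Busemann function (horocycle index) with respect to the base point `o`. -/
noncomputable def TreeWithEnd.hor {q : ℕ} (T : TreeWithEnd q) (o x : T.V) : ℤ :=
  (T.down o x : ℤ) - (T.up o x : ℤ)

/-- The graph structure of the tree. -/
def TreeWithEnd.graph {q : ℕ} (T : TreeWithEnd q) : SimpleGraph T.V :=
  SimpleGraph.fromRel (fun x y => T.pred x = y)

/-- Transition probabilities of the random walk `P_{α,q}` on `T_q`. -/
noncomputable def treeWalk {q : ℕ} (T : TreeWithEnd q) (α : ℝ) : T.V → T.V → ℝ :=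
  fun x y => if T.pred y = x then α / q else if y = T.pred x then 1 - α else 0


namespace SphAux

variable {q : ℕ} (T : TreeWithEnd q)

lemma iter_inj {x : T.V} {a b : ℕ} (h : T.pred^[a] x = T.pred^[b] x) : a = b := by
  rcases lt_trichotomy a b with hab | hab | hab
  · exfalso
    apply T.acyclic (T.pred^[a] x) (b - a) (Nat.sub_pos_of_lt hab)
    rw [← Function.iterate_add_apply, Nat.sub_add_cancel hab.le, ← h]
  · exact hab
  · exfalso
    apply T.acyclic (T.pred^[b] x) (a - b) (Nat.sub_pos_of_lt hab)
    rw [← Function.iterate_add_apply, Nat.sub_add_cancel hab.le, h]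

lemma shift {x y : T.V} {m n : ℕ} (h : T.pred^[m] x = T.pred^[n] y) (k : ℕ) :
    T.pred^[m+k] x = T.pred^[n+k] y := by
  rw [add_comm m k, add_comm n k, Function.iterate_add_apply, Function.iterate_add_apply, h]

lemma up_le {x y : T.V} {m n : ℕ} (h : T.pred^[m] x = T.pred^[n] y) : T.up x y ≤ m :=
  Nat.sInf_le ⟨n, h⟩

lemma spec (x y : T.V) : T.pred^[T.up x y] x = T.pred^[T.down x y] y := by
  have hne : {m : ℕ | ∃ n : ℕ, T.pred^[m] x = T.pred^[n] y}.Nonempty := by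
    obtain ⟨m, n, h⟩ := T.connected x y
    exact ⟨m, n, h⟩
  obtain ⟨n, hn0⟩ := Nat.sInf_mem hne
  have hn : T.pred^[T.up x y] x = T.pred^[n] y := hn0
  have hdown : T.down x y = n := by
    apply le_antisymm
    · exact Nat.sInf_le ⟨_, hn.symm⟩
    · refine le_csInf ⟨n, T.up x y, hn.symm⟩ ?_
      rintro n' ⟨m', hm'⟩
      have h1 : T.up x y ≤ m' := up_le T hm'.symm
      have h2 := shift T hn (m' - T.up x y)
      rw [Nat.add_sub_cancel' h1] at h2
      have h3 : T.pred^[n + (m' - T.up x y)] y = T.pred^[n'] y := h2.symm.trans hm'.symm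
      have := iter_inj T h3
      omega
  rw [hdown]; exact hn

lemma updown_of {x y : T.V} {m n : ℕ} (h : T.pred^[m] x = T.pred^[n] y)
    (hmin : ∀ m' n', T.pred^[m'] x = T.pred^[n'] y → m ≤ m') :
    T.up x y = m ∧ T.down x y = n := by
  have hup : T.up x y = m := le_antisymm (up_le T h) (hmin _ _ (spec T x y))
  refine ⟨hup, ?_⟩
  have hs := spec T x y
  rw [hup, h] at hs
  exact (iter_inj T hs).symm

lemma pred_up_pos {x y : T.V} {D : ℕ} (h : T.up x y = D + 1) :
    T.up (T.pred x) y = D ∧ T.down (T.pred x) y = T.down x y := by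
  have hs := spec T x y
  rw [h] at hs
  have hw : T.pred^[D] (T.pred x) = T.pred^[T.down x y] y := by
    rw [← Function.iterate_succ_apply]; exact hs
  apply updown_of T hw
  intro m' n' h'
  rw [← Function.iterate_succ_apply] at h'
  have := up_le T h'
  omega

lemma pred_up_zero {x y : T.V} (h : T.up x y = 0) :
    T.up (T.pred x) y = 0 ∧ T.down (T.pred x) y = T.down x y + 1 := by
  have hs := spec T x y
  rw [h] at hs
  simp only [Function.iterate_zero_apply] at hs
  have hw : T.pred^[0] (T.pred x) = T.pred^[T.down x y + 1] y := by
    rw [Function.iterate_zero_apply, Function.iterate_succ_apply', ← hs]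
  exact updown_of T hw (fun m' n' _ => Nat.zero_le m')

lemma child_cases {x c : T.V} (y : T.V) (hc : T.pred c = x) :
    (T.up c y = T.up x y + 1 ∧ T.down c y = T.down x y) ∨
    (T.up x y = 0 ∧ T.up c y = 0 ∧ T.down c y + 1 = T.down x y ∧ c = T.pred^[T.down c y] y) := by
  rcases Nat.eq_zero_or_pos (T.up c y) with h0 | hpos
  · right
    have hs := spec T c y
    rw [h0] at hs
    simp only [Function.iterate_zero_apply] at hs
    have hw : T.pred^[0] x = T.pred^[T.down c y + 1] y := by
      rw [Function.iterate_zero_apply, Function.iterate_succ_apply', ← hs, hc]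
    obtain ⟨h1, h2⟩ := updown_of T hw (fun m' n' _ => Nat.zero_le m')
    exact ⟨h1, h0, h2.symm, hs⟩
  · left
    obtain ⟨k, hk⟩ : ∃ k, T.up c y = k + 1 := ⟨T.up c y - 1, by omega⟩
    have := pred_up_pos T hk
    rw [hc] at this
    rw [hk, this.1, this.2]
    exact ⟨rfl, rfl⟩

lemma child_special {x y : T.V} {M : ℕ} (h0 : T.up x y = 0) (hN : T.down x y = M + 1) :
    T.pred (T.pred^[M] y) = x ∧ T.up (T.pred^[M] y) y = 0 ∧ T.down (T.pred^[M] y) y = M := by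
  have hs := spec T x y
  rw [h0, hN] at hs
  simp only [Function.iterate_zero_apply] at hs
  refine ⟨?_, ?_⟩
  · rw [hs, Function.iterate_succ_apply']
  · exact updown_of T (by rw [Function.iterate_zero_apply]) (fun m' n' _ => Nat.zero_le m')

noncomputable def Gfun (qR β t u Q : ℝ) : ℝ :=
  (t * u / Q) * ((qR * β⁻¹ + 1) / (qR * β⁻¹ ^ 2 - 1)
    + (t⁻¹ - 1) / (β⁻¹ - 1) + (u⁻¹ - 1) / (β⁻¹ - 1))

section
variable {qR β α t u Q : ℝ} (hβ0 : 0 < β) (hβ1 : β < 1) (hqR : 2 ≤ qR)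
  (hα : α = (1 + β)⁻¹) (ht : t ≠ 0) (hu : u ≠ 0) (hQ : Q ≠ 0)

include hβ0 hβ1 hqR

lemma aux_facts : β ≠ 0 ∧ (1 + β) ≠ 0 ∧ (1 - β) ≠ 0 ∧ qR - β ^ 2 ≠ 0 ∧ qR ≠ 0 := by
  refine ⟨ne_of_gt hβ0, by positivity, by nlinarith, by nlinarith, by nlinarith⟩

lemma Gfun_eq : Gfun qR β t u Q =
    (t * u / Q) * ((qR * β⁻¹ + 1) * (β ^ 2 / (qR - β ^ 2))
      + (t⁻¹ - 1) * (β / (1 - β)) + (u⁻¹ - 1) * (β / (1 - β))) := by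
  obtain ⟨h1, h2, h3, h4, h5⟩ := aux_facts hβ0 hβ1 hqR
  have e1 : β⁻¹ - 1 = (1 - β) / β := by field_simp
  have e2 : qR * β⁻¹ ^ 2 - 1 = (qR - β ^ 2) / β ^ 2 := by field_simp
  unfold Gfun
  rw [e1, e2, div_div_eq_mul_div, div_div_eq_mul_div, div_div_eq_mul_div]
  ring

include hα ht hu hQ

lemma key1 :
    (1 - α) * Gfun qR β t u Q + qR * (α / qR * Gfun qR β (t * β ^ 2) u Q)
      = Gfun qR β (t * β) u Q := by
  obtain ⟨h1, h2, h3, h4, h5⟩ := aux_facts hβ0 hβ1 hqR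
  subst hα
  rw [Gfun_eq hβ0 hβ1 hqR, Gfun_eq hβ0 hβ1 hqR, Gfun_eq hβ0 hβ1 hqR]
  field_simp
  ring

omit ht in
lemma key2 :
    (1 - α) * Gfun qR β 1 (u * β ^ 2) (Q * qR ^ 2)
      + α / qR * Gfun qR β 1 u Q
      + (qR - 1) * (α / qR * Gfun qR β β (u * β) (Q * qR))
      = Gfun qR β 1 (u * β) (Q * qR) := by
  obtain ⟨h1, h2, h3, h4, h5⟩ := aux_facts hβ0 hβ1 hqR
  subst hα
  rw [Gfun_eq hβ0 hβ1 hqR, Gfun_eq hβ0 hβ1 hqR, Gfun_eq hβ0 hβ1 hqR, Gfun_eq hβ0 hβ1 hqR]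
  field_simp
  ring

omit ht hu hQ in
lemma key3 :
    (1 - α) * Gfun qR β 1 β qR + qR * (α / qR * Gfun qR β β 1 1)
      = Gfun qR β 1 1 1 := by
  obtain ⟨h1, h2, h3, h4, h5⟩ := aux_facts hβ0 hβ1 hqR
  subst hα
  rw [Gfun_eq hβ0 hβ1 hqR, Gfun_eq hβ0 hβ1 hqR, Gfun_eq hβ0 hβ1 hqR]
  field_simp
  ring

end

end SphAux

open SphAux

/-- For the random walk `P_{α,q}` on `T_q` with 1/2 < α < 1 and β = (1-α)/α,
the generalized spherical function
φ(x) = (β^{d(x,y)}/q^{∇}) ((qβ⁻¹+1)/(qβ⁻²-1) + (β^{-Δ}-1)/(β⁻¹-1) + (β^{-∇}-1)/(β⁻¹-1))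
is harmonic in x for each fixed y. -/
theorem spherical_harmonic_drift (q : ℕ) (hq : 2 ≤ q) (α : ℝ)
    (hα0 : 1 / 2 < α) (hα1 : α < 1) (β : ℝ) (hβ : β = (1 - α) / α)
    (T : TreeWithEnd q) (y : T.V)
    (φ : T.V → ℝ)
    (hφ : ∀ x, φ x =
      (β ^ (T.up x y + T.down x y) / (q : ℝ) ^ (T.down x y)) *
        ((q * β⁻¹ + 1) / (q * β⁻¹ ^ 2 - 1)
          + (β ^ (-(T.up x y : ℤ)) - 1) / (β⁻¹ - 1)
          + (β ^ (-(T.down x y : ℤ)) - 1) / (β⁻¹ - 1))) :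
    ∀ x, (∑' z, treeWalk T α x z * φ z) = φ x := by
  have hα : 0 < α := by linarith
  have hβ0 : 0 < β := by rw [hβ]; exact div_pos (by linarith) hα
  have hβ1 : β < 1 := by rw [hβ, div_lt_one hα]; linarith
  have hqR : (2 : ℝ) ≤ (q : ℝ) := by exact_mod_cast hq
  have hq0 : (q : ℝ) ≠ 0 := by positivity
  have h1β : (1 : ℝ) + β ≠ 0 := by positivity
  have hαeq : α = (1 + β)⁻¹ := by
    have h : 1 + β = 1 / α := by rw [hβ]; field_simp; ring
    rw [h, one_div, inv_inv]
  -- φ in G form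
  have hzp : ∀ k : ℕ, β ^ (-(k : ℤ)) = (β ^ k)⁻¹ := fun k => by
    rw [zpow_neg, zpow_natCast]
  have hφG : ∀ z, φ z =
      Gfun (q : ℝ) β (β ^ T.up z y) (β ^ T.down z y) ((q : ℝ) ^ T.down z y) := by
    intro z
    rw [hφ z, hzp, hzp, pow_add]
    rfl
  intro x
  -- children
  have hfinT : Finite {c : T.V // T.pred c = x} := by
    rcases finite_or_infinite {c : T.V // T.pred c = x} with h | h
    · exact h
    · exfalso
      have := T.fiber_card x
      rw [Nat.card_eq_zero_of_infinite] at this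
      omega
  have hfin : {c : T.V | T.pred c = x}.Finite := Set.finite_coe_iff.mp hfinT
  have hcard : hfin.toFinset.card = q := by
    have h1 : Nat.card {c : T.V | T.pred c = x} = q := T.fiber_card x
    rw [Nat.card_coe_set_eq, Set.ncard_eq_toFinset_card _ hfin] at h1
    exact h1
  have hpx2 : T.pred (T.pred x) ≠ x := by
    have h2 := T.acyclic x 2 (by norm_num)
    rw [show (2 : ℕ) = 1 + 1 from rfl, Function.iterate_add_apply] at h2
    simpa using h2
  have hsum0 : ∀ z ∉ insert (T.pred x) hfin.toFinset, treeWalk T α x z * φ z = 0 := by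
    intro z hz
    rw [Finset.mem_insert, Set.Finite.mem_toFinset, Set.mem_setOf_eq] at hz
    push_neg at hz
    simp only [treeWalk]
    rw [if_neg hz.2, if_neg hz.1, zero_mul]
  rw [tsum_eq_sum hsum0,
    Finset.sum_insert (by rw [Set.Finite.mem_toFinset, Set.mem_setOf_eq]; exact hpx2)]
  have hwpred : treeWalk T α x (T.pred x) = 1 - α := by
    simp [treeWalk, hpx2]
  have hwc : ∀ c ∈ hfin.toFinset, treeWalk T α x c * φ c = α / q * φ c := by
    intro c hc
    rw [Set.Finite.mem_toFinset, Set.mem_setOf_eq] at hc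
    simp only [treeWalk]
    rw [if_pos hc]
  rw [hwpred, hφG x, hφG (T.pred x)]
  rcases Nat.eq_zero_or_pos (T.up x y) with hΔ | hΔ
  · rcases Nat.eq_zero_or_pos (T.down x y) with hN | hN
    · -- x = y case
      obtain ⟨hu1, hd1⟩ := pred_up_zero T hΔ
      have hchv : ∀ c ∈ hfin.toFinset,
          treeWalk T α x c * φ c = α / q * Gfun (q : ℝ) β β 1 1 := by
        intro c hc
        rw [hwc c hc]
        rw [Set.Finite.mem_toFinset, Set.mem_setOf_eq] at hc
        rcases child_cases T y hc with ⟨h1, h2⟩ | ⟨_, _, h3, _⟩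
        · rw [hφG c, h1, h2, hΔ, hN, pow_one, pow_zero, pow_zero]
        · omega
      rw [Finset.sum_congr rfl hchv, Finset.sum_const, hcard, nsmul_eq_mul]
      rw [hu1, hd1, hΔ, hN]
      norm_num
      exact key3 hβ0 hβ1 hqR hαeq
    · -- x above-ish: up = 0, down = M+1
      obtain ⟨M, hM⟩ : ∃ M, T.down x y = M + 1 := ⟨T.down x y - 1, by omega⟩
      obtain ⟨hu1, hd1⟩ := pred_up_zero T hΔ
      obtain ⟨hcs, hcu, hcd⟩ := child_special T hΔ hM
      have hmem : T.pred^[M] y ∈ hfin.toFinset := by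
        rw [Set.Finite.mem_toFinset, Set.mem_setOf_eq]; exact hcs
      rw [← Finset.add_sum_erase _ _ hmem]
      have herase : ∀ c ∈ hfin.toFinset.erase (T.pred^[M] y),
          treeWalk T α x c * φ c
            = α / q * Gfun (q : ℝ) β β (β ^ M * β) (((q : ℝ) ^ M) * q) := by
        intro c hc
        obtain ⟨hne, hc'⟩ := Finset.mem_erase.mp hc
        rw [hwc c (Finset.mem_erase.mp hc).2]
        rw [Set.Finite.mem_toFinset, Set.mem_setOf_eq] at hc'
        rcases child_cases T y hc' with ⟨h1, h2⟩ | ⟨_, _, h3, h4⟩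
        · rw [hφG c, h1, h2, hΔ, hM, show β ^ (0 + 1) = β from by ring,
            show β ^ (M + 1) = β ^ M * β from by ring,
            show (q : ℝ) ^ (M + 1) = (q : ℝ) ^ M * q from by ring]
        · exfalso
          apply hne
          rw [h4, show T.down c y = M from by omega]
      rw [Finset.sum_congr rfl herase, Finset.sum_const, Finset.card_erase_of_mem hmem,
        hcard, nsmul_eq_mul]
      rw [hwc _ hmem, hφG (T.pred^[M] y), hcu, hcd, hu1, hd1, hΔ, hM]
      have hcast : ((q - 1 : ℕ) : ℝ) = (q : ℝ) - 1 := by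
        have h1 : (1 : ℕ) ≤ q := by omega
        push_cast [h1]
        ring
      rw [hcast, show β ^ (0 : ℕ) = 1 from pow_zero β]
      have e1 : β ^ (M + 1 + 1) = β ^ M * β ^ 2 := by ring
      have e2 : (q : ℝ) ^ (M + 1 + 1) = (q : ℝ) ^ M * (q : ℝ) ^ 2 := by ring
      have e3 : β ^ (M + 1) = β ^ M * β := by ring
      have e4 : (q : ℝ) ^ (M + 1) = (q : ℝ) ^ M * q := by ring
      rw [e1, e2, e3, e4]
      have hK := key2 hβ0 hβ1 hqR hαeq (u := β ^ M) (Q := (q : ℝ) ^ M)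
        (pow_ne_zero _ (ne_of_gt hβ0)) (pow_ne_zero _ hq0)
      linarith [hK]
  · -- up = D + 1
    obtain ⟨D, hD⟩ : ∃ D, T.up x y = D + 1 := ⟨T.up x y - 1, by omega⟩
    obtain ⟨hu1, hd1⟩ := pred_up_pos T hD
    have hchv : ∀ c ∈ hfin.toFinset,
        treeWalk T α x c * φ c
          = α / q * Gfun (q : ℝ) β (β ^ D * β ^ 2) (β ^ T.down x y) ((q : ℝ) ^ T.down x y) := by
      intro c hc
      rw [hwc c hc]
      rw [Set.Finite.mem_toFinset, Set.mem_setOf_eq] at hc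
      rcases child_cases T y hc with ⟨h1, h2⟩ | ⟨h0, _, _, _⟩
      · rw [hφG c, h1, h2, hD, show β ^ (D + 1 + 1) = β ^ D * β ^ 2 from by ring]
      · omega
    rw [Finset.sum_congr rfl hchv, Finset.sum_const, hcard, nsmul_eq_mul]
    rw [hu1, hd1, hD, show β ^ (D + 1) = β ^ D * β from by ring]
    exact key1 hβ0 hβ1 hqR hαeq (pow_ne_zero _ (ne_of_gt hβ0))
      (pow_ne_zero _ (ne_of_gt hβ0)) (pow_ne_zero _ hq0)
end

section
/- For the random walk P_{1/2,q} on the homogeneous tree T_q, the generalized spherical function φ(x,y) = q^{-∇(x,y)} ( (q+1)/(q-1) + d(x,y) ) is harmonic in x for each fixed vertex y. -/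
open Classical

namespace TreeWithEnd

variable {q : ℕ} (T : TreeWithEnd q)

lemma iterate_inj (z : T.V) : ∀ {m n : ℕ}, T.pred^[m] z = T.pred^[n] z → m = n := by
  have key : ∀ m n : ℕ, m ≤ n → T.pred^[m] z = T.pred^[n] z → m = n := by
    intro m n hmn h
    by_contra hne
    have hpos : 0 < n - m := by omega
    apply T.acyclic (T.pred^[m] z) (n - m) hpos
    rw [← Function.iterate_add_apply, show n - m + m = n by omega, ← h]
  intro m n h
  rcases le_total m n with hle | hle
  · exact key m n hle h
  · exact (key n m hle h.symm).symm

lemma up_mem (x y : T.V) : ∃ n, T.pred^[T.up x y] x = T.pred^[n] y := by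
  have hne : {m : ℕ | ∃ n : ℕ, T.pred^[m] x = T.pred^[n] y}.Nonempty := by
    obtain ⟨m, n, h⟩ := T.connected x y
    exact ⟨m, n, h⟩
  exact Nat.sInf_mem hne

lemma up_le (x y : T.V) {m n : ℕ} (h : T.pred^[m] x = T.pred^[n] y) : T.up x y ≤ m :=
  Nat.sInf_le ⟨n, h⟩

lemma diff (x y : T.V) {m n m' n' : ℕ} (h : T.pred^[m] x = T.pred^[n] y)
    (h' : T.pred^[m'] x = T.pred^[n'] y) : m + n' = m' + n := by
  have key : T.pred^[n' + m] x = T.pred^[n + m'] x := by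
    rw [Function.iterate_add_apply, Function.iterate_add_apply, h, h',
      ← Function.iterate_add_apply, ← Function.iterate_add_apply, add_comm n' n]
  have := T.iterate_inj x key
  omega

lemma up_spec (x y : T.V) : T.pred^[T.up x y] x = T.pred^[T.up y x] y := by
  obtain ⟨n, hn⟩ := T.up_mem x y
  obtain ⟨m, hm⟩ := T.up_mem y x
  have hd := T.diff x y hn hm.symm
  have h1 : T.up x y ≤ m := T.up_le x y hm.symm
  have h2 : T.up y x ≤ n := T.up_le y x hn.symm
  have : n = T.up y x := by omega
  rw [← this]; exact hn

lemma pair_iff (x y : T.V) (m n : ℕ) :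
    T.pred^[m] x = T.pred^[n] y ↔ ∃ k, m = T.up x y + k ∧ n = T.up y x + k := by
  constructor
  · intro h
    have hd := T.diff x y h (T.up_spec x y)
    have hm : T.up x y ≤ m := T.up_le x y h
    exact ⟨m - T.up x y, by omega, by omega⟩
  · rintro ⟨k, rfl, rfl⟩
    rw [add_comm, Function.iterate_add_apply, add_comm (T.up y x) k,
      Function.iterate_add_apply, T.up_spec]

lemma up_eq_of (x y : T.V) (a b : ℕ) (hab : T.pred^[a] x = T.pred^[b] y)
    (hmin : ∀ m n, T.pred^[m] x = T.pred^[n] y → a ≤ m ∧ b ≤ n) :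
    T.up x y = a ∧ T.up y x = b := by
  constructor
  · refine le_antisymm (T.up_le x y hab) ?_
    obtain ⟨n, hn⟩ := T.up_mem x y
    exact (hmin _ _ hn).1
  · refine le_antisymm (T.up_le y x hab.symm) ?_
    obtain ⟨m, hm⟩ := T.up_mem y x
    exact (hmin _ _ hm.symm).2

lemma up_pred_pos (x y : T.V) (h : 1 ≤ T.up x y) :
    T.up (T.pred x) y = T.up x y - 1 ∧ T.up y (T.pred x) = T.up y x := by
  apply T.up_eq_of
  · have key : T.pred^[(T.up x y - 1) + 1] x = T.pred^[T.up y x] y := by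
      rw [show T.up x y - 1 + 1 = T.up x y by omega]; exact T.up_spec x y
    rw [Function.iterate_succ_apply] at key
    exact key
  · intro m n hmn
    rw [← Function.iterate_succ_apply] at hmn
    obtain ⟨k, h1, h2⟩ := (T.pair_iff x y (m + 1) n).mp hmn
    omega

lemma up_pred_zero (x y : T.V) (h : T.up x y = 0) :
    T.up (T.pred x) y = 0 ∧ T.up y (T.pred x) = T.up y x + 1 := by
  apply T.up_eq_of
  · have hxy : x = T.pred^[T.up y x] y := by
      have := T.up_spec x y
      rw [h] at this
      simpa using this
    show T.pred^[0] (T.pred x) = T.pred^[T.up y x + 1] y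
    rw [Function.iterate_zero_apply, Function.iterate_succ_apply', ← hxy]
  · intro m n hmn
    rw [← Function.iterate_succ_apply] at hmn
    obtain ⟨k, h1, h2⟩ := (T.pair_iff x y (m + 1) n).mp hmn
    omega

lemma up_child_nonspecial (x y z : T.V) (hz : T.pred z = x)
    (hns : ∀ n, z ≠ T.pred^[n] y) :
    T.up z y = T.up x y + 1 ∧ T.up y z = T.up y x := by
  apply T.up_eq_of
  · rw [Function.iterate_succ_apply, hz]
    exact T.up_spec x y
  · intro m n hmn
    cases m with
    | zero => exact absurd hmn (hns n)
    | succ m =>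
      rw [Function.iterate_succ_apply, hz] at hmn
      obtain ⟨k, h1, h2⟩ := (T.pair_iff x y m n).mp hmn
      omega

lemma child_special (x y z : T.V) (hz : T.pred z = x) {n : ℕ}
    (h : z = T.pred^[n] y) : T.up x y = 0 ∧ n + 1 = T.up y x := by
  have hx : T.pred^[0] x = T.pred^[n+1] y := by
    simp [Function.iterate_succ_apply', ← h, hz]
  obtain ⟨k, h1, h2⟩ := (T.pair_iff x y 0 (n + 1)).mp hx
  omega

lemma up_special (x y : T.V) (h0 : T.up x y = 0) (hv : 1 ≤ T.up y x) :
    T.pred (T.pred^[T.up y x - 1] y) = x ∧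
    T.up (T.pred^[T.up y x - 1] y) y = 0 ∧
    T.up y (T.pred^[T.up y x - 1] y) = T.up y x - 1 := by
  have hs := T.up_spec x y
  rw [h0] at hs
  simp only [Function.iterate_zero_apply] at hs
  have hpred : T.pred (T.pred^[T.up y x - 1] y) = x := by
    have key : T.pred^[(T.up y x - 1) + 1] y = x := by
      rw [show T.up y x - 1 + 1 = T.up y x by omega]; exact hs.symm
    rw [Function.iterate_succ_apply'] at key
    exact key
  refine ⟨hpred, ?_⟩
  apply T.up_eq_of
  · simp
  · intro m n hmn
    refine ⟨Nat.zero_le _, ?_⟩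
    have : T.pred^[m + (T.up y x - 1)] y = T.pred^[n] y := by
      rw [Function.iterate_add_apply, ← hmn]
    have := T.iterate_inj y this
    omega

lemma pred_ne_self_iterate (x : T.V) {n : ℕ} (hn : 0 < n) : T.pred^[n] x ≠ x :=
  T.acyclic x n hn

end TreeWithEnd

/-- For the driftless random walk `P_{1/2,q}` on `T_q`, the generalized
spherical function φ(x) = q^{-∇(x,y)} ((q+1)/(q-1) + d(x,y)) is harmonic
in x for each fixed y. -/
theorem spherical_harmonic_driftless (q : ℕ) (hq : 2 ≤ q)
    (T : TreeWithEnd q) (y : T.V) (φ : T.V → ℝ)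
    (hφ : ∀ x, φ x = ((q : ℝ) ^ (T.down x y))⁻¹ *
      (((q : ℝ) + 1) / ((q : ℝ) - 1) + ((T.up x y + T.down x y : ℕ) : ℝ))) :
    ∀ x, (∑' z, treeWalk T (1 / 2) x z * φ z) = φ x := by
  classical
  intro x
  have hQ0 : (q : ℝ) ≠ 0 := by
    have : (0:ℝ) < q := by exact_mod_cast Nat.lt_of_lt_of_le Nat.zero_lt_two hq
    linarith
  have hQ1 : (q : ℝ) - 1 ≠ 0 := by
    have : (2:ℝ) ≤ q := by exact_mod_cast hq
    linarith
  obtain ⟨u, hu⟩ : ∃ u, T.up x y = u := ⟨_, rfl⟩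
  obtain ⟨v, hv⟩ : ∃ v, T.up y x = v := ⟨_, rfl⟩
  have hdown : ∀ z : T.V, T.down z y = T.up y z := fun z => rfl
  -- the set of children of x is finite with q elements
  have hfiber : Finite {z : T.V // T.pred z = x} :=
    Nat.finite_of_card_ne_zero (by rw [T.fiber_card]; omega)
  have hfin : {z : T.V | T.pred z = x}.Finite := by
    rw [← Set.finite_coe_iff]; exact hfiber
  set s : Finset T.V := hfin.toFinset with hs
  have hmem : ∀ z : T.V, z ∈ s ↔ T.pred z = x := by
    intro z; rw [hs, Set.Finite.mem_toFinset]; rfl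
  have hcard : s.card = q := by
    have h1 : Nat.card ↑{z : T.V | T.pred z = x} = q := T.fiber_card x
    rw [hs, ← Set.ncard_eq_toFinset_card _ hfin, ← Nat.card_coe_set_eq]
    exact h1
  have hxs : T.pred x ∉ s := by
    rw [hmem]
    intro h
    exact T.acyclic x 2 (by omega) h
  -- reduce the tsum to a finite sum
  have hsum : (∑' z, treeWalk T (1 / 2) x z * φ z)
      = ∑ z ∈ insert (T.pred x) s, treeWalk T (1 / 2) x z * φ z := by
    apply tsum_eq_sum
    intro b hb
    rw [Finset.mem_insert] at hb
    push_neg at hb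
    have h1 : T.pred b ≠ x := fun h => hb.2 ((hmem b).mpr h)
    have h2 : b ≠ T.pred x := hb.1
    simp [treeWalk, h1, h2]
  rw [hsum, Finset.sum_insert hxs]
  have hwpred : treeWalk T (1 / 2) x (T.pred x) = 1 / 2 := by
    have h1 : T.pred (T.pred x) ≠ x := T.acyclic x 2 (by omega)
    simp [treeWalk, h1]
    norm_num
  have hwchild : ∀ z ∈ s, treeWalk T (1 / 2) x z = 1 / (2 * q) := by
    intro z hz
    rw [hmem] at hz
    simp [treeWalk, hz]
    ring
  rw [hwpred]
  rw [Finset.sum_congr rfl (fun z hz => by rw [hwchild z hz])]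
  set C : ℝ := ((q : ℝ) + 1) / ((q : ℝ) - 1) with hC
  have hφx : φ x = ((q : ℝ) ^ v)⁻¹ * (C + ((u : ℝ) + (v : ℝ))) := by
    rw [hφ x, hdown, hu, hv]
    push_cast; ring_nf
  by_cases hcase : u = 0 ∧ 1 ≤ v
  · -- x is a strict ancestor of y: there is a special child on the path to y
    obtain ⟨hu0, hv1⟩ := hcase
    have hu0' : T.up x y = 0 := hu.trans hu0
    have hv1' : 1 ≤ T.up y x := by rw [hv]; exact hv1
    obtain ⟨hz0pred, hz0up, hz0down⟩ := T.up_special x y hu0' hv1'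
    rw [hv] at hz0pred hz0up hz0down
    set z0 : T.V := T.pred^[v - 1] y with hz0
    have hz0s : z0 ∈ s := (hmem z0).mpr hz0pred
    rw [← Finset.add_sum_erase _ _ hz0s]
    have hcard' : (s.erase z0).card = q - 1 := by
      rw [Finset.card_erase_of_mem hz0s, hcard]
    have hφz0 : φ z0 = ((q : ℝ) ^ (v - 1))⁻¹ * (C + ((v : ℝ) - 1)) := by
      rw [hφ z0, hdown, hz0up, hz0down]
      have h9 : ((0 + (v - 1) : ℕ) : ℝ) = (v : ℝ) - 1 := by
        push_cast [Nat.cast_sub hv1]; ring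
      rw [h9]
    have hφpred : φ (T.pred x) = ((q : ℝ) ^ (v + 1))⁻¹ * (C + ((v : ℝ) + 1)) := by
      obtain ⟨h1, h2⟩ := T.up_pred_zero x y hu0'
      rw [hv] at h2
      rw [hφ (T.pred x), hdown, h1, h2]
      push_cast; ring_nf
    have hφother : ∀ z ∈ s.erase z0,
        φ z = ((q : ℝ) ^ v)⁻¹ * (C + ((v : ℝ) + 1)) := by
      intro z hz
      obtain ⟨hzne, hzs⟩ := Finset.mem_erase.mp hz
      have hzpred : T.pred z = x := (hmem z).mp hzs
      have hns : ∀ n, z ≠ T.pred^[n] y := by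
        intro n hn
        obtain ⟨_, h2⟩ := T.child_special x y z hzpred hn
        rw [hv] at h2
        apply hzne
        rw [hn, hz0]; congr 1; omega
      obtain ⟨h1, h2⟩ := T.up_child_nonspecial x y z hzpred hns
      rw [hu] at h1
      rw [hv] at h2
      rw [hφ z, hdown, h1, h2, hu0]
      push_cast; ring_nf
    rw [Finset.sum_congr rfl (fun z hz => by rw [hφother z hz]),
      Finset.sum_const, hcard', hφz0, hφpred, hφx, hu0]
    have hvsplit : ((q : ℝ)) ^ v = (q : ℝ) ^ (v - 1) * q := by
      rw [← pow_succ]; congr 1; omega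
    have hpow0 : ((q : ℝ)) ^ (v - 1) ≠ 0 := pow_ne_zero _ hQ0
    have hcast : ((q - 1 : ℕ) : ℝ) = (q : ℝ) - 1 := by
      push_cast [Nat.cast_sub (by omega : 1 ≤ q)]; ring
    have hvs1 : ((q : ℝ)) ^ (v + 1) = (q : ℝ) ^ (v - 1) * q * q := by
      rw [pow_succ, hvsplit]
    rw [nsmul_eq_mul, hcast, hvs1, hvsplit, hC]
    generalize hw : ((q : ℝ)) ^ (v - 1) = w
    rw [hw] at hpow0
    push_cast
    field_simp
    ring
  · -- no special child: every child z of x has up z y = u + 1, down z y = v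
    have hφchild : ∀ z ∈ s,
        φ z = ((q : ℝ) ^ v)⁻¹ * (C + ((u : ℝ) + 1 + (v : ℝ))) := by
      intro z hz
      have hzpred : T.pred z = x := (hmem z).mp hz
      have hns : ∀ n, z ≠ T.pred^[n] y := by
        intro n hn
        obtain ⟨h1, h2⟩ := T.child_special x y z hzpred hn
        rw [hu] at h1; rw [hv] at h2
        exact hcase ⟨h1, by omega⟩
      obtain ⟨h1, h2⟩ := T.up_child_nonspecial x y z hzpred hns
      rw [hu] at h1
      rw [hv] at h2
      rw [hφ z, hdown, h1, h2]
      push_cast; ring_nf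
    rw [Finset.sum_congr rfl (fun z hz => by rw [hφchild z hz]),
      Finset.sum_const, hcard, nsmul_eq_mul, hφx]
    have hpowv : ((q : ℝ)) ^ v ≠ 0 := pow_ne_zero _ hQ0
    by_cases hu1 : 1 ≤ u
    · have hu1' : 1 ≤ T.up x y := by rw [hu]; exact hu1
      obtain ⟨h1, h2⟩ := T.up_pred_pos x y hu1'
      rw [hu] at h1
      rw [hv] at h2
      rw [hφ (T.pred x), hdown, h1, h2]
      have hc1 : (((u - 1) + v : ℕ) : ℝ) = (u : ℝ) - 1 + v := by
        push_cast [Nat.cast_sub hu1]; ring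
      rw [hc1]
      field_simp
      ring
    · have hu0 : u = 0 := by omega
      have hv0 : v = 0 := by
        by_contra hv0
        exact hcase ⟨hu0, by omega⟩
      obtain ⟨h1, h2⟩ := T.up_pred_zero x y (hu.trans hu0)
      rw [hv] at h2
      rw [hφ (T.pred x), hdown, h1, h2, hu0, hv0, hC]
      push_cast
      field_simp
      ring
end

section
/- Let r ≥ 2 and for positive integers n define f_n(d) = ε_d · (n/(n+d)) · Σ_{m=d}^∞ r^{-m} n²/((n+m)(n+m+1)) for integers d ≥ 0, where ε_0 = 1 and ε_d = (r-1)/r for d ≥ 1. Then f_n(d) is increasing in n, f_n(d) → f(d) as n → ∞ where f(0) = r/(r-1) and f(d) = r^{-d} for d ≥ 1, and Σ_{d=0}^∞ f_n(d) → Σ_{d=0}^∞ f(d) = (r+1)/(r-1). -/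
open Classical Filter

/-- Equivalence between `ℕ` and `{m : ℕ // d ≤ m}`. -/
def fnAsympEquiv (d : ℕ) : ℕ ≃ {m : ℕ // d ≤ m} where
  toFun k := ⟨d + k, Nat.le_add_right d k⟩
  invFun m := m - d
  left_inv k := by simp
  right_inv m := by
    rcases m with ⟨m, hm⟩
    simp [Nat.add_sub_cancel' hm]

set_option maxHeartbeats 1600000 in
/-- Asymptotics of the family f_n(d) = ε_d (n/(n+d)) Σ_{m≥d} r^{-m} n²/((n+m)(n+m+1)):
monotone increase in n, pointwise limits f(0) = r/(r-1), f(d) = r^{-d} (d ≥ 1),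
and convergence of the sums to (r+1)/(r-1). -/
theorem fn_asymptotics (r : ℕ) (hr : 2 ≤ r)
    (ε : ℕ → ℝ) (hε : ∀ d : ℕ, ε d = if d = 0 then 1 else ((r : ℝ) - 1) / r)
    (f : ℕ → ℕ → ℝ)
    (hf : ∀ (n : ℕ), 1 ≤ n → ∀ (d : ℕ), f n d =
      ε d * ((n : ℝ) / (n + d)) *
        ∑' m : {m : ℕ // d ≤ m},
          ((r : ℝ) ^ (m : ℕ))⁻¹ * ((n : ℝ) ^ 2 / (((n : ℝ) + m) * ((n : ℝ) + m + 1))))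
    (flim : ℕ → ℝ)
    (hflim : ∀ d : ℕ, flim d = if d = 0 then (r : ℝ) / (r - 1) else ((r : ℝ) ^ d)⁻¹) :
    (∀ (d n₁ n₂ : ℕ), 1 ≤ n₁ → n₁ ≤ n₂ → f n₁ d ≤ f n₂ d) ∧
    (∀ d : ℕ, Tendsto (fun n : ℕ => f n d) atTop (nhds (flim d))) ∧
    Tendsto (fun n : ℕ => ∑' d : ℕ, f n d) atTop
      (nhds (((r : ℝ) + 1) / ((r : ℝ) - 1))) ∧
    (∑' d : ℕ, flim d) = ((r : ℝ) + 1) / ((r : ℝ) - 1) := by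
  set R : ℝ := (r : ℝ) with hRdef
  have hR2 : (2 : ℝ) ≤ R := by rw [hRdef]; exact_mod_cast hr
  have hR0 : (0 : ℝ) < R := by linarith
  have hR1 : (1 : ℝ) < R := by linarith
  have hRne : R ≠ 0 := ne_of_gt hR0
  have hRm1 : R - 1 ≠ 0 := by intro h; nlinarith
  have hRi0 : (0 : ℝ) ≤ R⁻¹ := by positivity
  have hRi1 : R⁻¹ < 1 := by
    rw [inv_lt_one_iff₀]; right; exact hR1
  have h1mR : (0:ℝ) < 1 - R⁻¹ := by linarith
  -- geometric summability
  have hgeo : Summable (fun m : ℕ => (R ^ m)⁻¹) := by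
    simpa [inv_pow] using summable_geometric_of_lt_one hRi0 hRi1
  have hgeoSub : ∀ d : ℕ, Summable (fun m : {m : ℕ // d ≤ m} => (R ^ (m : ℕ))⁻¹) :=
    fun d => hgeo.subtype _
  -- geometric tsum over the subtype
  have hG : ∀ d : ℕ, (∑' m : {m : ℕ // d ≤ m}, (R ^ (m : ℕ))⁻¹)
      = (R⁻¹) ^ d * (1 - R⁻¹)⁻¹ := by
    intro d
    rw [← Equiv.tsum_eq (fnAsympEquiv d)]
    have : ∀ k : ℕ, (R ^ ((fnAsympEquiv d k : ℕ)))⁻¹ = (R⁻¹) ^ d * (R⁻¹) ^ k := by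
      intro k; simp [fnAsympEquiv, pow_add, ← inv_pow]; ring
    rw [tsum_congr this, tsum_mul_left, tsum_geometric_of_lt_one hRi0 hRi1]
  -- ε facts
  have hε0 : ∀ d, 0 ≤ ε d := by
    intro d; rw [hε]; split
    · norm_num
    · apply div_nonneg <;> linarith
  have hε1 : ∀ d, ε d ≤ 1 := by
    intro d; rw [hε]; split
    · exact le_refl 1
    · rw [div_le_one hR0]; linarith
  -- term facts
  have hXnonneg : ∀ n m : ℕ, 0 ≤ (n : ℝ) ^ 2 / (((n : ℝ) + m) * ((n : ℝ) + m + 1)) := by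
    intro n m; positivity
  have hXle : ∀ n m : ℕ, 1 ≤ n →
      (n : ℝ) ^ 2 / (((n : ℝ) + m) * ((n : ℝ) + m + 1)) ≤ 1 := by
    intro n m hn
    have hn1 : (1 : ℝ) ≤ n := by exact_mod_cast hn
    have hm0 : (0 : ℝ) ≤ m := Nat.cast_nonneg m
    rw [div_le_one (by nlinarith)]
    nlinarith
  have htermle : ∀ n m : ℕ, 1 ≤ n →
      (R ^ m)⁻¹ * ((n : ℝ) ^ 2 / (((n : ℝ) + m) * ((n : ℝ) + m + 1))) ≤ (R ^ m)⁻¹ := by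
    intro n m hn
    exact mul_le_of_le_one_right (by positivity) (hXle n m hn)
  have hsumm : ∀ (n : ℕ), 1 ≤ n → ∀ d : ℕ,
      Summable (fun m : {m : ℕ // d ≤ m} =>
        (R ^ (m : ℕ))⁻¹ * ((n : ℝ) ^ 2 / (((n : ℝ) + m) * ((n : ℝ) + m + 1)))) := by
    intro n hn d
    refine Summable.of_nonneg_of_le (fun m => by positivity)
      (fun m => htermle n m hn) (hgeoSub d)
  -- inner sum nonneg and bounded
  have hSnonneg : ∀ (n : ℕ) (d : ℕ),
      0 ≤ ∑' m : {m : ℕ // d ≤ m},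
        (R ^ (m : ℕ))⁻¹ * ((n : ℝ) ^ 2 / (((n : ℝ) + m) * ((n : ℝ) + m + 1))) := by
    intro n d
    exact tsum_nonneg (fun m => by positivity)
  have hSle : ∀ (n : ℕ), 1 ≤ n → ∀ d : ℕ,
      (∑' m : {m : ℕ // d ≤ m},
        (R ^ (m : ℕ))⁻¹ * ((n : ℝ) ^ 2 / (((n : ℝ) + m) * ((n : ℝ) + m + 1))))
        ≤ (R⁻¹) ^ d * (1 - R⁻¹)⁻¹ := by
    intro n hn d
    rw [← hG d]
    exact Summable.tsum_le_tsum (fun m => htermle n m hn) (hsumm n hn d) (hgeoSub d)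
  -- Part 1: monotonicity in n
  have part1 : ∀ (d n₁ n₂ : ℕ), 1 ≤ n₁ → n₁ ≤ n₂ → f n₁ d ≤ f n₂ d := by
    intro d n₁ n₂ h1 h12
    have h2 : 1 ≤ n₂ := le_trans h1 h12
    rw [hf n₁ h1 d, hf n₂ h2 d]
    have hn1 : (1:ℝ) ≤ (n₁:ℝ) := by exact_mod_cast h1
    have hn12 : (n₁:ℝ) ≤ (n₂:ℝ) := by exact_mod_cast h12
    have hd0 : (0:ℝ) ≤ (d:ℝ) := Nat.cast_nonneg d
    have key : ∀ m : ℕ, (n₁:ℝ)/((n₁:ℝ)+(d:ℝ)) * ((n₁:ℝ)^2/(((n₁:ℝ)+m)*((n₁:ℝ)+m+1)))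
        ≤ (n₂:ℝ)/((n₂:ℝ)+(d:ℝ)) * ((n₂:ℝ)^2/(((n₂:ℝ)+m)*((n₂:ℝ)+m+1))) := by
      intro m
      have hm0 : (0:ℝ) ≤ (m:ℝ) := Nat.cast_nonneg m
      rw [div_mul_div_comm, div_mul_div_comm,
        div_le_div_iff₀ (mul_pos (by linarith) (mul_pos (by linarith) (by linarith)))
          (mul_pos (by linarith) (mul_pos (by linarith) (by linarith)))]
      have A : (n₁:ℝ)*((n₂:ℝ)+(d:ℝ)) ≤ (n₂:ℝ)*((n₁:ℝ)+(d:ℝ)) := by nlinarith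
      have B : (n₁:ℝ)*((n₂:ℝ)+(m:ℝ)) ≤ (n₂:ℝ)*((n₁:ℝ)+(m:ℝ)) := by nlinarith
      have C : (n₁:ℝ)*((n₂:ℝ)+(m:ℝ)+1) ≤ (n₂:ℝ)*((n₁:ℝ)+(m:ℝ)+1) := by nlinarith
      have hAB := mul_le_mul A B (by positivity) (by positivity)
      have hABC := mul_le_mul hAB C (by positivity) (by positivity)
      nlinarith [hABC]
    rw [mul_assoc, mul_assoc]
    apply mul_le_mul_of_nonneg_left _ (hε0 d)
    rw [← tsum_mul_left, ← tsum_mul_left]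
    apply Summable.tsum_le_tsum _ ((hsumm n₁ h1 d).mul_left _) ((hsumm n₂ h2 d).mul_left _)
    intro m
    rw [mul_left_comm, mul_left_comm ((n₂:ℝ)/((n₂:ℝ)+(d:ℝ)))]
    exact mul_le_mul_of_nonneg_left (key m) (by positivity)
  -- the limit value identity
  have hsub : 1 - R⁻¹ = (R-1)/R := by
    rw [eq_div_iff hRne, sub_mul, inv_mul_cancel₀ hRne, one_mul]
  have hinv : (1 - R⁻¹)⁻¹ = R/(R-1) := by rw [hsub, inv_div]
  have hfl : ∀ d : ℕ, ε d * 1 * ((R⁻¹)^d * (1 - R⁻¹)⁻¹) = flim d := by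
    intro d
    rw [hε, hflim]
    rcases Nat.eq_zero_or_pos d with h | h
    · subst h
      rw [if_pos rfl, if_pos rfl, pow_zero, one_mul, one_mul, one_mul]
      exact hinv
    · rw [if_neg (Nat.pos_iff_ne_zero.mp h), if_neg (Nat.pos_iff_ne_zero.mp h), ← inv_pow,
        hinv]
      have h3 : (R-1)/R * (R/(R-1)) = 1 := by
        rw [div_mul_div_comm, mul_comm (R-1) R]
        exact div_self (mul_ne_zero hRne hRm1)
      rw [mul_one, mul_comm ((R⁻¹)^d) (R/(R-1)), ← mul_assoc, h3, one_mul]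
  -- Part 2: pointwise limits
  have part2 : ∀ d : ℕ, Tendsto (fun n : ℕ => f n d) atTop (nhds (flim d)) := by
    intro d
    have hS : Tendsto (fun n : ℕ => ∑' m : {m : ℕ // d ≤ m},
        (R ^ (m:ℕ))⁻¹ * ((n:ℝ)^2 / (((n:ℝ)+m)*((n:ℝ)+m+1)))) atTop
        (nhds ((R⁻¹)^d * (1 - R⁻¹)⁻¹)) := by
      rw [← hG d]
      apply tendsto_tsum_of_dominated_convergence (hgeoSub d)
      · intro m
        have h1 := tendsto_natCast_div_add_atTop (𝕜 := ℝ) (((m:ℕ):ℝ))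
        have h2 := tendsto_natCast_div_add_atTop (𝕜 := ℝ) (((m:ℕ):ℝ)+1)
        have h3 : Tendsto (fun n : ℕ => (n:ℝ)^2 / (((n:ℝ)+((m:ℕ):ℝ))*((n:ℝ)+((m:ℕ):ℝ)+1)))
            atTop (nhds 1) := by
          have h4 := h1.mul h2
          rw [one_mul] at h4
          apply h4.congr
          intro n
          rw [div_mul_div_comm]; ring
        have h5 := h3.const_mul ((R ^ (m:ℕ))⁻¹)
        rw [mul_one] at h5
        exact h5
      · filter_upwards [eventually_ge_atTop 1] with n hn m
        rw [Real.norm_eq_abs, abs_of_nonneg (by positivity)]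
        exact htermle n m hn
    have hmain : Tendsto (fun n : ℕ => ε d * ((n:ℝ)/((n:ℝ)+(d:ℝ))) *
        (∑' m : {m : ℕ // d ≤ m},
          (R ^ (m:ℕ))⁻¹ * ((n:ℝ)^2 / (((n:ℝ)+m)*((n:ℝ)+m+1))))) atTop
        (nhds (ε d * 1 * ((R⁻¹)^d * (1 - R⁻¹)⁻¹))) :=
      (tendsto_const_nhds.mul (tendsto_natCast_div_add_atTop (𝕜 := ℝ) ((d:ℕ):ℝ))).mul hS
    rw [hfl d] at hmain
    refine Tendsto.congr' ?_ hmain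
    filter_upwards [eventually_ge_atTop 1] with n hn
    exact (hf n hn d).symm
  -- Part 4: sum of the limits
  have hsumflim : Summable flim := by
    apply (summable_nat_add_iff 1).mp
    have heq : (fun n : ℕ => flim (n+1)) = fun n : ℕ => (R⁻¹)^n * R⁻¹ := by
      funext n
      rw [hflim]
      simp [← inv_pow, pow_succ]
      ring
    rw [heq]
    exact (summable_geometric_of_lt_one hRi0 hRi1).mul_right R⁻¹
  have htsumflim : (∑' d : ℕ, flim d) = (R + 1)/(R - 1) := by
    rw [Summable.tsum_eq_zero_add hsumflim]
    have h0 : flim 0 = R/(R-1) := by rw [hflim]; simp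
    have h1 : (∑' d : ℕ, flim (d+1)) = R⁻¹ * (1 - R⁻¹)⁻¹ := by
      have heq : ∀ d : ℕ, flim (d+1) = R⁻¹ * (R⁻¹)^d := by
        intro d
        rw [hflim]
        simp [← inv_pow, pow_succ]
      rw [tsum_congr heq, tsum_mul_left, tsum_geometric_of_lt_one hRi0 hRi1]
    rw [h0, h1, hinv, ← mul_div_assoc, inv_mul_cancel₀ hRne, ← add_div]

  -- Part 3: convergence of the sums
  have part3 : Tendsto (fun n : ℕ => ∑' d : ℕ, f n d) atTop (nhds ((R+1)/(R-1))) := by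
    rw [← htsumflim]
    apply tendsto_tsum_of_dominated_convergence
      (bound := fun d : ℕ => (R⁻¹)^d * (1-R⁻¹)⁻¹)
      ((summable_geometric_of_lt_one hRi0 hRi1).mul_right _) part2
    filter_upwards [eventually_ge_atTop 1] with n hn d
    have hn1 : (1:ℝ) ≤ (n:ℝ) := by exact_mod_cast hn
    have hd0 : (0:ℝ) ≤ (d:ℝ) := Nat.cast_nonneg d
    rw [hf n hn d, Real.norm_eq_abs,
      abs_of_nonneg (mul_nonneg (mul_nonneg (hε0 d) (by positivity)) (hSnonneg n d))]
    have hA : ε d * ((n:ℝ)/((n:ℝ)+(d:ℝ))) ≤ 1 := by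
      have hq1 : (n:ℝ)/((n:ℝ)+(d:ℝ)) ≤ 1 := by
        rw [div_le_one (by linarith)]; linarith
      nlinarith [hε0 d, hε1 d, div_nonneg (le_trans zero_le_one hn1) (by linarith : (0:ℝ) ≤ (n:ℝ)+(d:ℝ))]
    calc ε d * ((n:ℝ)/((n:ℝ)+(d:ℝ))) *
        (∑' m : {m : ℕ // d ≤ m},
          (R ^ (m:ℕ))⁻¹ * ((n:ℝ)^2 / (((n:ℝ)+m)*((n:ℝ)+m+1))))
        ≤ 1 * (∑' m : {m : ℕ // d ≤ m},
          (R ^ (m:ℕ))⁻¹ * ((n:ℝ)^2 / (((n:ℝ)+m)*((n:ℝ)+m+1)))) :=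
          mul_le_mul_of_nonneg_right hA (hSnonneg n d)
      _ ≤ (R⁻¹)^d * (1-R⁻¹)⁻¹ := by rw [one_mul]; exact hSle n hn d
  exact ⟨part1, part2, part3, htsumflim⟩
end
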